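/- Leray support-function inequality for the (n−q)-convex model domain (inequality (3.13)): Let n ≥ 1, 1 ≤ q ≤ n, and λ₁, …, λ_{q−1} ∈ [−1, 1]. Let R : ℂⁿ → ℝ be a C² function whose value, first derivative and second derivative all vanish at the origin. Define ρ(z) = −Im z_n + Σ_{j=1}^{q−1} λ_j |z_j|² + Σ_{j=q}^{n} |z_j|² + R(z), and for z, ζ ∈ ℂⁿ define g_j(z, ζ) = (∂ρ/∂ζ_j)(ζ) + (conj ζ_j − conj z_j) for 1 ≤ j ≤ q−1 and g_j(z, ζ) = (∂ρ/∂ζ_j)(ζ) for q ≤ j ≤ n. Then there is a neighborhood U of 0 in ℂⁿ such that for all ζ, z ∈ U: 2 Re ( Σ_{j=1}^{n} g_j(z, ζ) (ζ_j − z_j) ) ≥ ρ(ζ) − ρ(z) + (1/2) |ζ − z|². -/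

import Mathlib

open Complex

noncomputable def wderiv (n : ℕ) (ρ : EuclideanSpace ℂ (Fin n) → ℝ)
    (ζ : EuclideanSpace ℂ (Fin n)) (j : Fin n) : ℂ :=
  (1 / 2 : ℂ) *
    ((fderiv ℝ ρ ζ (EuclideanSpace.single j 1) : ℂ) -
      Complex.I * (fderiv ℝ ρ ζ (EuclideanSpace.single j Complex.I) : ℂ))

lemma euclid_sum_single {n : ℕ} (w : EuclideanSpace ℂ (Fin n)) :
    ∑ j, EuclideanSpace.single j (w j) = w := by
  ext i
  rw [WithLp.ofLp_sum, Finset.sum_apply]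
  simp [EuclideanSpace.single_apply, Finset.sum_ite_eq']

lemma single_decomp {n : ℕ} (j : Fin n) (a : ℂ) :
    EuclideanSpace.single j a =
      a.re • EuclideanSpace.single j (1:ℂ) + a.im • EuclideanSpace.single j Complex.I := by
  ext i
  by_cases h : i = j
  · simp [EuclideanSpace.single_apply, h, Complex.real_smul]
  · simp [EuclideanSpace.single_apply, h]

lemma two_re_half (a b : ℝ) (z : ℂ) :
    2 * ((1/2 : ℂ) * ((a:ℂ) - Complex.I*(b:ℂ)) * z).re = a * z.re + b * z.im := by
  simp [Complex.mul_re, Complex.mul_im]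
  ring

lemma two_re_wderiv_sum {n : ℕ} (f : EuclideanSpace ℂ (Fin n) → ℝ)
    (ζ w : EuclideanSpace ℂ (Fin n)) :
    2 * (∑ j, wderiv n f ζ j * w j).re = fderiv ℝ f ζ w := by
  have h : fderiv ℝ f ζ w = ∑ j, ((w j).re * fderiv ℝ f ζ (EuclideanSpace.single j 1)
      + (w j).im * fderiv ℝ f ζ (EuclideanSpace.single j Complex.I)) := by
    conv_lhs => rw [← euclid_sum_single w]
    rw [map_sum]
    refine Finset.sum_congr rfl fun j _ => ?_
    rw [single_decomp j (w j), map_add, map_smul, map_smul]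
    simp
  rw [h, Complex.re_sum, Finset.mul_sum]
  refine Finset.sum_congr rfl fun j _ => ?_
  rw [wderiv, two_re_half]
  ring

lemma taylor_bound {E : Type*} [NormedAddCommGroup E] [NormedSpace ℝ E]
    (f : E → ℝ) (hf : ContDiff ℝ 2 f) {s : Set E} (hs : Convex ℝ s) {C : ℝ}
    (hC : ∀ x ∈ s, ‖iteratedFDeriv ℝ 2 f x‖ ≤ C)
    {ζ z : E} (hζ : ζ ∈ s) (hz : z ∈ s) :
    |f z - f ζ - fderiv ℝ f ζ (z - ζ)| ≤ C * ‖z - ζ‖ ^ 2 := by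
  have hC0 : 0 ≤ C := le_trans (norm_nonneg _) (hC ζ hζ)
  have hf1 : ContDiff ℝ 1 (fderiv ℝ f) := hf.fderiv_right (le_refl 2)
  have hHess : ∀ x ∈ s, ‖fderiv ℝ (fderiv ℝ f) x‖ ≤ C := by
    intro x hx
    refine ContinuousLinearMap.opNorm_le_bound _ hC0 fun v => ?_
    refine ContinuousLinearMap.opNorm_le_bound _ (by positivity) fun w => ?_
    have h2 : fderiv ℝ (fderiv ℝ f) x v w = iteratedFDeriv ℝ 2 f x ![v, w] := by
      rw [iteratedFDeriv_two_apply]; simp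
    rw [h2]
    calc ‖iteratedFDeriv ℝ 2 f x ![v, w]‖
        ≤ ‖iteratedFDeriv ℝ 2 f x‖ * ∏ i, ‖(![v, w]) i‖ :=
          (iteratedFDeriv ℝ 2 f x).le_opNorm _
      _ = ‖iteratedFDeriv ℝ 2 f x‖ * (‖v‖ * ‖w‖) := by
          rw [Fin.prod_univ_two]; simp
      _ ≤ C * (‖v‖ * ‖w‖) := by
          apply mul_le_mul_of_nonneg_right (hC x hx) (by positivity)
      _ = C * ‖v‖ * ‖w‖ := by ring
  have hLip : ∀ x ∈ s, ‖fderiv ℝ f x - fderiv ℝ f ζ‖ ≤ C * ‖x - ζ‖ := fun x hx =>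
    hs.norm_image_sub_le_of_norm_fderiv_le
      (fun y _ => (hf1.differentiable one_ne_zero).differentiableAt) hHess hζ hx
  set g : E → ℝ := fun x => f x - fderiv ℝ f ζ x with hg
  have hgd : ∀ x : E, DifferentiableAt ℝ g x := fun x =>
    ((hf.differentiable (by norm_num)).differentiableAt).sub
      ((fderiv ℝ f ζ).differentiableAt)
  have hgderiv : ∀ x : E, fderiv ℝ g x = fderiv ℝ f x - fderiv ℝ f ζ := by
    intro x
    rw [hg, fderiv_fun_sub ((hf.differentiable (by norm_num)).differentiableAt)
      ((fderiv ℝ f ζ).differentiableAt), (fderiv ℝ f ζ).fderiv]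
  have hsub : segment ℝ ζ z ⊆ s := hs.segment_subset hζ hz
  have hsegnorm : ∀ x ∈ segment ℝ ζ z, ‖x - ζ‖ ≤ ‖z - ζ‖ := by
    rintro x ⟨a, b, ha, hb, hab, rfl⟩
    have hxz : a • ζ + b • z - ζ = b • (z - ζ) := by
      have : a = 1 - b := by linarith
      rw [this]; module
    rw [hxz, norm_smul, Real.norm_of_nonneg hb]
    have hb1 : b ≤ 1 := by linarith
    nlinarith [norm_nonneg (z - ζ)]
  have key := (convex_segment ζ z).norm_image_sub_le_of_norm_fderiv_le
    (f := g) (C := C * ‖z - ζ‖) (fun x _ => hgd x)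
    (fun x hx => by
      rw [hgderiv]
      exact le_trans (hLip x (hsub hx)) (mul_le_mul_of_nonneg_left (hsegnorm x hx) hC0))
    (left_mem_segment ℝ ζ z) (right_mem_segment ℝ ζ z)
  have hgz : g z - g ζ = f z - f ζ - fderiv ℝ f ζ (z - ζ) := by
    simp only [hg, map_sub]; ring
  rw [hgz] at key
  calc |f z - f ζ - fderiv ℝ f ζ (z - ζ)| ≤ C * ‖z - ζ‖ * ‖z - ζ‖ := key
    _ = C * ‖z - ζ‖ ^ 2 := by ring

/-- Leray support-function inequality for the `(n-q)`-convex model domain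
(inequality (3.13)).  Coordinates are 0-indexed: the index `j` with `1 ≤ j ≤ q-1`
(1-indexed) corresponds to `(j : ℕ) < q - 1`, and `z_n` is the coordinate `n - 1`. -/
theorem stmt4 (n q : ℕ) (hn : 1 ≤ n) (hq1 : 1 ≤ q) (hqn : q ≤ n)
    (lam : Fin n → ℝ) (hlam : ∀ j : Fin n, (j : ℕ) < q - 1 → |lam j| ≤ 1)
    (R : EuclideanSpace ℂ (Fin n) → ℝ) (hR : ContDiff ℝ 2 R)
    (hR0 : R 0 = 0) (hR1 : fderiv ℝ R 0 = 0) (hR2 : iteratedFDeriv ℝ 2 R 0 = 0)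
    (ρ : EuclideanSpace ℂ (Fin n) → ℝ)
    (hρ : ∀ z, ρ z = -(z ⟨n - 1, Nat.sub_lt hn Nat.one_pos⟩).im +
        ∑ j : Fin n, (if (j : ℕ) < q - 1 then lam j else 1) * ‖z j‖ ^ 2 + R z)
    (g : EuclideanSpace ℂ (Fin n) → EuclideanSpace ℂ (Fin n) → Fin n → ℂ)
    (hg : ∀ z ζ j, g z ζ j =
        if (j : ℕ) < q - 1 then wderiv n ρ ζ j + (starRingEnd ℂ (ζ j) - starRingEnd ℂ (z j))
        else wderiv n ρ ζ j) :
    ∃ U ∈ nhds (0 : EuclideanSpace ℂ (Fin n)), ∀ ζ ∈ U, ∀ z ∈ U,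
      ρ ζ - ρ z + (1 / 2) * ‖ζ - z‖ ^ 2 ≤ 2 * (∑ j, g z ζ j * (ζ j - z j)).re := by
  classical
  -- small Hessian neighborhood
  have hcont : Continuous (iteratedFDeriv ℝ 2 R) := hR.continuous_iteratedFDeriv (by norm_num)
  have hten : Filter.Tendsto (fun x : EuclideanSpace ℂ (Fin n) => ‖iteratedFDeriv ℝ 2 R x‖) (nhds 0) (nhds 0) := by
    simpa [hR2, norm_zero] using (hcont.norm.tendsto (0 : EuclideanSpace ℂ (Fin n)))
  have hev : ∀ᶠ x : EuclideanSpace ℂ (Fin n) in nhds 0, ‖iteratedFDeriv ℝ 2 R x‖ < 1/2 :=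
    hten.eventually_lt_const (by norm_num)
  obtain ⟨r, hr0, hball⟩ := Metric.eventually_nhds_iff_ball.mp hev
  refine ⟨Metric.ball 0 r, Metric.ball_mem_nhds 0 hr0, ?_⟩
  intro ζ hζU z hzU
  have hbound : ∀ x ∈ Metric.ball (0 : EuclideanSpace ℂ (Fin n)) r, ‖iteratedFDeriv ℝ 2 R x‖ ≤ 1/2 :=
    fun x hx => (hball x hx).le
  have htay := taylor_bound R hR (convex_ball (0 : EuclideanSpace ℂ (Fin n)) r) hbound hζU hzU
  set N : Fin n := ⟨n - 1, Nat.sub_lt hn Nat.one_pos⟩ with hNdef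
  set c : Fin n → ℝ := fun j => if (j : ℕ) < q - 1 then lam j else 1 with hcdef
  set d : EuclideanSpace ℂ (Fin n) := ζ - z with hddef
  have hdj : ∀ j, d j = ζ j - z j := fun j => rfl
  -- Taylor inequality in usable form
  have hzmζ : z - ζ = -d := by rw [hddef]; abel
  have hA : fderiv ℝ R ζ (z - ζ) = -(fderiv ℝ R ζ d) := by rw [hzmζ, map_neg]
  have htay' : -(1/2 * ‖d‖^2) ≤ R z - R ζ + fderiv ℝ R ζ d := by
    rw [hA] at htay
    have h1 := (abs_le.mp htay).1
    have h2 : ‖z - ζ‖ = ‖d‖ := by rw [hzmζ, norm_neg]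
    rw [h2] at h1
    linarith
  -- derivative of ρ at ζ
  have hρeq : ρ = fun w : EuclideanSpace ℂ (Fin n) => (-(w N).im + ∑ j, c j * ‖w j‖^2) + R w := by
    funext w; exact hρ w
  have hD1 : HasFDerivAt (fun w : EuclideanSpace ℂ (Fin n) => -(w N).im)
      (-((Complex.imCLM).comp (PiLp.proj 2 (fun _ : Fin n => ℂ) N : EuclideanSpace ℂ (Fin n) →L[ℝ] ℂ))) ζ :=
    (((Complex.imCLM).comp (PiLp.proj 2 (fun _ : Fin n => ℂ) N : EuclideanSpace ℂ (Fin n) →L[ℝ] ℂ)).hasFDerivAt).neg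
  have hD2 : ∀ j : Fin n, HasFDerivAt (fun w : EuclideanSpace ℂ (Fin n) => ‖w j‖^2)
      (2 • (innerSL ℝ (ζ j)).comp (PiLp.proj 2 (fun _ : Fin n => ℂ) j : EuclideanSpace ℂ (Fin n) →L[ℝ] ℂ)) ζ :=
    fun j => ((PiLp.proj 2 (fun _ : Fin n => ℂ) j : EuclideanSpace ℂ (Fin n) →L[ℝ] ℂ).hasFDerivAt).norm_sq
  have hD2' : HasFDerivAt (fun w : EuclideanSpace ℂ (Fin n) => ∑ j, c j * ‖w j‖^2)
      (∑ j, c j • (2 • (innerSL ℝ (ζ j)).comp (PiLp.proj 2 (fun _ : Fin n => ℂ) j : EuclideanSpace ℂ (Fin n) →L[ℝ] ℂ))) ζ :=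
    HasFDerivAt.fun_sum fun j _ => (hD2 j).const_mul (c j)
  have hDR : HasFDerivAt R (fderiv ℝ R ζ) ζ :=
    (hR.differentiable (by norm_num)).differentiableAt.hasFDerivAt
  have hDρ : HasFDerivAt ρ
      ((-((Complex.imCLM).comp (PiLp.proj 2 (fun _ : Fin n => ℂ) N : EuclideanSpace ℂ (Fin n) →L[ℝ] ℂ))
        + ∑ j, c j • (2 • (innerSL ℝ (ζ j)).comp (PiLp.proj 2 (fun _ : Fin n => ℂ) j : EuclideanSpace ℂ (Fin n) →L[ℝ] ℂ)))
        + fderiv ℝ R ζ) ζ := by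
    rw [hρeq]; exact (hD1.add hD2').add hDR
  have hval : fderiv ℝ ρ ζ d
      = -(d N).im + (∑ j, c j * (2 * (inner ℝ (ζ j) (d j) : ℝ))) + fderiv ℝ R ζ d := by
    rw [hDρ.fderiv]
    simp [ContinuousLinearMap.sum_apply, PiLp.proj_apply, mul_comm, mul_assoc, mul_left_comm]
    simp only [mul_add]
  -- rewrite the right-hand side
  have hsplit : (∑ j, g z ζ j * (ζ j - z j)) = (∑ j, wderiv n ρ ζ j * d j)
      + ∑ j : Fin n, (if (j : ℕ) < q - 1 then
          ((starRingEnd ℂ) (ζ j) - (starRingEnd ℂ) (z j)) * (ζ j - z j) else 0) := by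
    rw [← Finset.sum_add_distrib]
    refine Finset.sum_congr rfl fun j _ => ?_
    rw [hg z ζ j, hdj j]
    split_ifs <;> ring
  have hre2 : (∑ j : Fin n, (if (j : ℕ) < q - 1 then
      ((starRingEnd ℂ) (ζ j) - (starRingEnd ℂ) (z j)) * (ζ j - z j) else 0)).re
      = ∑ j : Fin n, (if (j : ℕ) < q - 1 then ‖d j‖^2 else 0) := by
    rw [Complex.re_sum]
    refine Finset.sum_congr rfl fun j _ => ?_
    split_ifs with h
    · rw [← map_sub, ← hdj j, mul_comm, Complex.mul_conj]
      simp [Complex.normSq_eq_norm_sq, ← Complex.ofReal_pow]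
    · simp
  have hre : 2 * (∑ j, g z ζ j * (ζ j - z j)).re
      = fderiv ℝ ρ ζ d + 2 * ∑ j : Fin n, (if (j : ℕ) < q - 1 then ‖d j‖^2 else 0) := by
    rw [hsplit, Complex.add_re, hre2, mul_add, two_re_wderiv_sum]
  -- quadratic identity
  have hquad : ∀ j, ‖z j‖^2 = ‖ζ j‖^2 - 2*(inner ℝ (ζ j) (d j) : ℝ) + ‖d j‖^2 := by
    intro j
    have hzj : z j = ζ j - d j := by rw [hdj j]; ring
    rw [hzj]
    exact norm_sub_sq_real (ζ j) (d j)
  have hbridge : (∑ j, c j * (2 * (inner ℝ (ζ j) (d j) : ℝ)))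
      - (∑ j, c j * ‖ζ j‖^2) + (∑ j, c j * ‖z j‖^2) = ∑ j, c j * ‖d j‖^2 := by
    rw [← Finset.sum_sub_distrib, ← Finset.sum_add_distrib]
    refine Finset.sum_congr rfl fun j _ => ?_
    rw [hquad j]; ring
  have hnormsum : ‖d‖^2 = ∑ j, ‖d j‖^2 := PiLp.norm_sq_eq_of_L2 _ d
  have hsum_ge : ∑ j, ‖d j‖^2 ≤ (∑ j, c j * ‖d j‖^2)
      + 2 * ∑ j : Fin n, (if (j : ℕ) < q - 1 then ‖d j‖^2 else 0) := by
    rw [Finset.mul_sum, ← Finset.sum_add_distrib]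
    refine Finset.sum_le_sum fun j _ => ?_
    have hd0 : (0:ℝ) ≤ ‖d j‖^2 := sq_nonneg _
    by_cases h : (j : ℕ) < q - 1
    · have h1 := (abs_le.mp (hlam j h)).1
      have hcj : c j = lam j := by simp only [hcdef]; exact if_pos h
      rw [if_pos h, hcj]
      have h2 : (-1:ℝ) * ‖d j‖^2 ≤ lam j * ‖d j‖^2 :=
        mul_le_mul_of_nonneg_right h1 hd0
      linarith
    · have hcj : c j = 1 := by simp only [hcdef]; exact if_neg h
      rw [if_neg h, hcj]
      linarith
  -- put everything together
  have hρζ : ρ ζ = -(ζ N).im + (∑ j, c j * ‖ζ j‖^2) + R ζ := hρ ζ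
  have hρz : ρ z = -(z N).im + (∑ j, c j * ‖z j‖^2) + R z := hρ z
  have hdN : (d N).im = (ζ N).im - (z N).im := by rw [hdj N, Complex.sub_im]
  rw [hre, hval, hρζ, hρz]
  linarith [htay', hsum_ge, hbridge, hnormsum, hdN]
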